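/- (Proposition 2, per-step bound) For the PIE iterates x, for every n ≥ 1, ‖x n − x (n−1)‖ ≤ (√α₀)^n · ((1/√α₀ − 1)·C₁ + λ·C₂), i.e. ‖x n − x (n−1)‖ ≤ (√α₀)^n · K. -/

import Mathlib

open Finset in
/-- Proposition 2, per-step bound for the PIE iterates. -/
theorem pie_step_norm_bound {V : Type*} [NormedAddCommGroup V] [NormedSpace ℝ V]
    (α₀ lam : ℝ) (hα₀ : 0 < α₀) (hα₀' : α₀ < 1) (hlam : 0 ≤ lam)
    (x₀ : V) (e : ℕ → V) (x : ℕ → V)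
    (hx : ∀ N : ℕ, x N = (Real.sqrt α₀) ^ N • x₀
        + lam • ∑ i ∈ Finset.Icc 1 N, (Real.sqrt α₀) ^ i • e i)
    (C₁ C₂ : ℝ) (hC₁ : 0 ≤ C₁) (hC₂ : 0 ≤ C₂)
    (hx₀ : ‖x₀‖ ≤ C₁) (he : ∀ n : ℕ, 1 ≤ n → ‖e n‖ ≤ C₂)
    (K : ℝ) (hK : K = (1 / Real.sqrt α₀ - 1) * C₁ + lam * C₂)
    (n : ℕ) (hn : 1 ≤ n) :
    ‖x n - x (n - 1)‖ ≤ (Real.sqrt α₀) ^ n * K := by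
  obtain ⟨m, rfl⟩ := Nat.exists_eq_add_of_le hn
  set s := Real.sqrt α₀ with hs
  have hs0 : 0 < s := Real.sqrt_pos.mpr hα₀
  have hs1 : s < 1 := by
    rw [hs, show (1:ℝ) = Real.sqrt 1 by simp]
    exact Real.sqrt_lt_sqrt hα₀.le hα₀'
  have hsum : ∑ i ∈ Finset.Icc 1 (1 + m), s ^ i • e i
      = (∑ i ∈ Finset.Icc 1 m, s ^ i • e i) + s ^ (1 + m) • e (1 + m) := by
    rw [show 1 + m = m + 1 by ring, Finset.sum_Icc_succ_top (by omega)]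
  have hdiff : x (1 + m) - x (1 + m - 1)
      = (s ^ (1 + m) - s ^ m) • x₀ + (lam * s ^ (1 + m)) • e (1 + m) := by
    rw [show 1 + m - 1 = m by omega, hx, hx, hsum]
    rw [smul_add]
    module
  rw [hdiff, hK]
  have hpow : s ^ (1 + m) = s * s ^ m := by rw [pow_add, pow_one]
  have h1 : ‖(s ^ (1 + m) - s ^ m) • x₀ + (lam * s ^ (1 + m)) • e (1 + m)‖
      ≤ (s ^ m - s ^ (1 + m)) * C₁ + lam * s ^ (1 + m) * C₂ := by
    refine (norm_add_le _ _).trans (add_le_add ?_ ?_)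
    · rw [norm_smul, Real.norm_eq_abs, abs_of_nonpos (by nlinarith [pow_pos hs0 m, pow_nonneg hs0.le m, hpow])]
      have : -(s ^ (1 + m) - s ^ m) = s ^ m - s ^ (1 + m) := by ring
      rw [this]
      exact mul_le_mul_of_nonneg_left hx₀ (by nlinarith [pow_pos hs0 m, hpow])
    · rw [norm_smul, Real.norm_eq_abs, abs_of_nonneg (by positivity)]
      exact mul_le_mul_of_nonneg_left (he _ (by omega)) (by positivity)
  refine h1.trans (le_of_eq ?_)
  rw [hpow]
  field_simp
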